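/- Let m, n ≥ 1 be natural numbers, α ≥ 1, β ≥ 1 with αβ > 1, and let Q, W : [A, B] → ℝ be nonnegative continuous functions with A < B. Suppose z : [A, B] → ℝ is C^1, nondecreasing, with z(A) > 0, and satisfies (z'(r))^((m+1)β + n + 1) ≥ W(r) · (z(r))^((α+m+1)β + n) for all r in [A, B]. Then z(A)^((αβ-1)/((m+1)β+n+1)) · ∫_A^B W(r)^(1/((m+1)β+n+1)) dr ≤ ((m+1)β+n+1)/(αβ-1). -/

import Mathlib

open Set intervalIntegral MeasureTheory Filter Topology

theorem stmt_3 (m n : ℕ) (hm : 1 ≤ m) (hn : 1 ≤ n) (α β : ℝ) (hα : 1 ≤ α) (hβ : 1 ≤ β)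
    (hαβ : 1 < α * β) (A B : ℝ) (hAB : A < B) (Q W : ℝ → ℝ)
    (hQ0 : ∀ r ∈ Set.Icc A B, 0 ≤ Q r) (hQc : ContinuousOn Q (Set.Icc A B))
    (hW0 : ∀ r ∈ Set.Icc A B, 0 ≤ W r) (hWc : ContinuousOn W (Set.Icc A B))
    (z : ℝ → ℝ) (hz : ContDiffOn ℝ 1 z (Set.Icc A B)) (hzmono : MonotoneOn z (Set.Icc A B))
    (hzA : 0 < z A)
    (hineq : ∀ r ∈ Set.Icc A B,
      deriv z r ^ (((m : ℝ) + 1) * β + n + 1) ≥ W r * z r ^ (((α + m + 1) * β + n : ℝ))) :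
    z A ^ ((α * β - 1) / ((m + 1) * β + n + 1)) *
      ∫ r in A..B, W r ^ ((1 : ℝ) / ((m + 1) * β + n + 1)) ≤
    ((m + 1) * β + n + 1) / (α * β - 1) := by
  have hm1 : (1:ℝ) ≤ (m:ℝ) := by exact_mod_cast hm
  have hn1 : (1:ℝ) ≤ (n:ℝ) := by exact_mod_cast hn
  set p : ℝ := ((m:ℝ) + 1) * β + (n:ℝ) + 1 with hpdef
  have hp : 0 < p := by nlinarith
  have hab1 : 0 < α * β - 1 := by linarith
  set c : ℝ := (α * β - 1) / p with hcdef
  have hc : 0 < c := div_pos hab1 hp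
  have hAmem : A ∈ Set.Icc A B := Set.left_mem_Icc.2 hAB.le
  have hBmem : B ∈ Set.Icc A B := Set.right_mem_Icc.2 hAB.le
  have hzpos : ∀ r ∈ Set.Icc A B, 0 < z r := fun r hr =>
    lt_of_lt_of_le hzA (hzmono hAmem hr hr.1)
  -- key pointwise derivative bound on the open interval
  have key : ∀ r ∈ Set.Ioo A B, W r ^ ((1:ℝ)/p) * z r ^ (1 + c) ≤ deriv z r := by
    intro r hr
    have hrIcc : r ∈ Set.Icc A B := Set.Ioo_subset_Icc_self hr
    have hdiffAt : DifferentiableAt ℝ z r :=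
      (hz.differentiableOn one_ne_zero r hrIcc).differentiableAt (Icc_mem_nhds hr.1 hr.2)
    have hz' : 0 ≤ deriv z r := by
      have hslope : Tendsto (slope z r) (𝓝[>] r) (𝓝 (deriv z r)) := by
        have h := (hdiffAt.hasDerivAt.hasDerivWithinAt (s := Set.Ioi r))
        rw [hasDerivWithinAt_iff_tendsto_slope] at h
        simpa using h
      refine ge_of_tendsto hslope ?_
      filter_upwards [Ioo_mem_nhdsGT_of_mem ⟨le_refl r, hr.2⟩] with y hy
      have hzle : z r ≤ z y := hzmono hrIcc ⟨hr.1.le.trans hy.1.le, hy.2.le⟩ hy.1.le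
      have : (0:ℝ) < y - r := by linarith [hy.1]
      rw [slope_def_field]
      exact div_nonneg (by linarith) this.le
    have h1 := hineq r hrIcc
    have hWr := hW0 r hrIcc
    have hzr := hzpos r hrIcc
    have hbase : 0 ≤ W r * z r ^ ((α + m + 1) * β + (n:ℝ)) :=
      mul_nonneg hWr (Real.rpow_nonneg hzr.le _)
    have h2 : (W r * z r ^ ((α + m + 1) * β + (n:ℝ))) ^ ((1:ℝ)/p)
        ≤ (deriv z r ^ p) ^ ((1:ℝ)/p) :=
      Real.rpow_le_rpow hbase h1 (by positivity)
    have h3 : (deriv z r ^ p) ^ ((1:ℝ)/p) = deriv z r := by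
      rw [← Real.rpow_mul hz', mul_one_div, div_self hp.ne', Real.rpow_one]
    have h4 : (W r * z r ^ ((α + m + 1) * β + (n:ℝ))) ^ ((1:ℝ)/p)
        = W r ^ ((1:ℝ)/p) * z r ^ (1 + c) := by
      rw [Real.mul_rpow hWr (Real.rpow_nonneg hzr.le _), ← Real.rpow_mul hzr.le]
      congr 1
      rw [hcdef, hpdef]
      field_simp
      ring
    rw [h3, h4] at h2
    exact h2
  -- apply FTC-type comparison with g = -(z ^ (-c))
  set g : ℝ → ℝ := fun r => -(z r ^ (-c)) with hgdef
  set φ : ℝ → ℝ := fun r => c * W r ^ ((1:ℝ)/p) with hφdef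
  have hgcont : ContinuousOn g (Set.Icc A B) :=
    ((hz.continuousOn).rpow_const fun r hr => Or.inl (hzpos r hr).ne').neg
  have hφcont : ContinuousOn φ (Set.Icc A B) :=
    continuousOn_const.mul (hWc.rpow_const fun r hr => Or.inr (by positivity))
  have hφint : IntegrableOn φ (Set.Icc A B) := hφcont.integrableOn_Icc
  have hgderiv : ∀ r ∈ Set.Ioo A B,
      HasDerivWithinAt g (c * deriv z r * z r ^ (-c - 1)) (Set.Ioi r) r := by
    intro r hr
    have hrIcc : r ∈ Set.Icc A B := Set.Ioo_subset_Icc_self hr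
    have hdiffAt : DifferentiableAt ℝ z r :=
      (hz.differentiableOn one_ne_zero r hrIcc).differentiableAt (Icc_mem_nhds hr.1 hr.2)
    have h := (hdiffAt.hasDerivAt.rpow_const (p := -c) (Or.inl (hzpos r hrIcc).ne')).neg
    have heq : -(deriv z r * (-c) * z r ^ (-c - 1)) = c * deriv z r * z r ^ (-c - 1) := by ring
    rw [heq] at h
    exact h.hasDerivWithinAt
  have hφle : ∀ r ∈ Set.Ioo A B, φ r ≤ c * deriv z r * z r ^ (-c - 1) := by
    intro r hr
    have hrIcc : r ∈ Set.Icc A B := Set.Ioo_subset_Icc_self hr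
    have hzr := hzpos r hrIcc
    have hkey := key r hr
    have hmul : W r ^ ((1:ℝ)/p) * z r ^ (1 + c) * z r ^ (-c - 1)
        ≤ deriv z r * z r ^ (-c - 1) :=
      mul_le_mul_of_nonneg_right hkey (Real.rpow_nonneg hzr.le _)
    have hone : z r ^ (1 + c) * z r ^ (-c - 1) = 1 := by
      rw [← Real.rpow_add hzr, show (1 + c + (-c - 1)) = 0 by ring, Real.rpow_zero]
    calc φ r = c * (W r ^ ((1:ℝ)/p) * (z r ^ (1 + c) * z r ^ (-c - 1))) := by
              rw [hone]; ring
      _ = c * (W r ^ ((1:ℝ)/p) * z r ^ (1 + c) * z r ^ (-c - 1)) := by ring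
      _ ≤ c * (deriv z r * z r ^ (-c - 1)) := by
              exact mul_le_mul_of_nonneg_left hmul hc.le
      _ = c * deriv z r * z r ^ (-c - 1) := by ring
  have hmain : (∫ r in A..B, φ r) ≤ g B - g A :=
    integral_le_sub_of_hasDeriv_right_of_le hAB.le hgcont hgderiv hφint hφle
  have hgB : 0 ≤ z B ^ (-c) := Real.rpow_nonneg (hzpos B hBmem).le _
  have hmain2 : c * (∫ r in A..B, W r ^ ((1:ℝ)/p)) ≤ z A ^ (-c) := by
    have : (∫ r in A..B, φ r) = c * ∫ r in A..B, W r ^ ((1:ℝ)/p) := by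
      simp [hφdef, intervalIntegral.integral_const_mul]
    rw [this] at hmain
    have : g B - g A = z A ^ (-c) - z B ^ (-c) := by simp [hgdef]; ring
    rw [this] at hmain
    linarith
  have hprod : z A ^ c * z A ^ (-c) = 1 := by
    rw [← Real.rpow_add hzA]
    norm_num
  have hzc : 0 < z A ^ c := Real.rpow_pos_of_pos hzA _
  have hgoalrhs : p / (α * β - 1) = 1 / c := by
    rw [hcdef, one_div_div]
  rw [hgoalrhs, le_div_iff₀ hc]
  nlinarith [mul_le_mul_of_nonneg_left hmain2 hzc.le]
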